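/- arXiv:math/0005282 — 2 statements merged into one kernel-verified Lean document; each statement's English description precedes it below -/
import Mathlib

section
/- Let $P(X_1,\dots,X_n)$ be an element of the free Lie algebra on $n$ generators over $\mathbb{C}$ such that for every $k\in\mathbb{N}$ and every $X_1,\dots,X_n\in\mathfrak{gl}_k(\mathbb{C})$, the evaluation $P(X_1,\dots,X_n)=0$. Then $P=0$ in the free Lie algebra. -/
attribute [local instance 100] LieRing.ofAssociativeRing

open FreeLieAlgebra

namespace Stmt5Aux

variable (n : ℕ)

abbrev L := FreeLieAlgebra ℂ (Fin n)
abbrev MA := MonoidAlgebra ℂ (FreeMonoid (Fin n))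

noncomputable def phi : L n →ₗ⁅ℂ⁆ MA n :=
  FreeLieAlgebra.lift ℂ fun i => MonoidAlgebra.of ℂ (FreeMonoid (Fin n)) (FreeMonoid.of i)

theorem mem_lieSpan_range_of (u : L n) :
    u ∈ LieSubalgebra.lieSpan ℂ (L n) (Set.range (of ℂ)) := by
  set K := LieSubalgebra.lieSpan ℂ (L n) (Set.range (of ℂ)) with hK
  let g : L n →ₗ⁅ℂ⁆ K := FreeLieAlgebra.lift ℂ fun i =>
    (⟨of ℂ i, LieSubalgebra.subset_lieSpan ⟨i, rfl⟩⟩ : K)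
  have hcomp : K.incl.comp g = LieHom.id := by
    apply FreeLieAlgebra.hom_ext
    intro x
    simp [g, lift_of_apply]
  have h2 : K.incl (g u) = u := by
    have := DFunLike.congr_fun hcomp u
    simpa using this
  rw [← h2]
  exact (g u).2


/-- Right-normed bracketing of a word. -/
noncomputable def brkt : List (Fin n) → L n
  | [] => 0
  | [x] => of ℂ x
  | x :: y :: t => ⁅of ℂ x, brkt (y :: t)⁆

noncomputable def delta : MA n →ₗ[ℂ] L n :=
  (Finsupp.linearCombination ℂ fun w : FreeMonoid (Fin n) => brkt n w.toList) ∘ₗ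
    (MonoidAlgebra.coeffLinearEquiv ℂ).toLinearMap

noncomputable def adof (i : Fin n) : Module.End ℂ (L n) := LieAlgebra.ad ℂ (L n) (of ℂ i)

noncomputable def theta : MA n →ₐ[ℂ] Module.End ℂ (L n) :=
  MonoidAlgebra.lift ℂ (Module.End ℂ (L n)) (FreeMonoid (Fin n)) (FreeMonoid.lift (adof n))

theorem delta_single (w : FreeMonoid (Fin n)) (c : ℂ) :
    delta n (MonoidAlgebra.single w c) = c • brkt n w.toList :=
  Finsupp.linearCombination_single ℂ c w

theorem brkt_append (l : List (Fin n)) (x : Fin n) :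
    brkt n (l ++ [x]) = (l.map (adof n)).prod (of ℂ x) := by
  induction l with
  | nil => simp [brkt]
  | cons y l ih =>
    have hcons : brkt n (y :: (l ++ [x])) = ⁅of ℂ y, brkt n (l ++ [x])⁆ := by
      cases l with
      | nil => simp [brkt]
      | cons z l' => simp [brkt]
    simp only [List.cons_append, hcons, ih, List.map_cons, List.prod_cons,
      Module.End.mul_apply]
    simp [adof, LieAlgebra.ad_apply]

theorem delta_mul_of (a : MA n) (x : Fin n) :
    delta n (a * MonoidAlgebra.single (FreeMonoid.of x) 1) = theta n a (of ℂ x) := by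
  induction a using MonoidAlgebra.induction_linear with
  | zero => simp
  | add f g hf hg => simp [add_mul, hf, hg]
  | single w c =>
    rw [show (MonoidAlgebra.single w c : MA n) * MonoidAlgebra.single (FreeMonoid.of x) 1
        = MonoidAlgebra.single (w * FreeMonoid.of x) (c * 1) from
      MonoidAlgebra.single_mul_single _ _ _ _]
    rw [mul_one, delta_single]
    have htl : (w * FreeMonoid.of x).toList = w.toList ++ [x] := rfl
    rw [htl, brkt_append]
    simp only [theta, MonoidAlgebra.lift_single, FreeMonoid.lift_apply]
    simp

theorem theta_phi (u : L n) : theta n (phi n u) = LieAlgebra.ad ℂ (L n) u := by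
  have : (theta n).toLieHom.comp (phi n) = LieAlgebra.ad ℂ (L n) := by
    apply FreeLieAlgebra.hom_ext
    intro x
    simp only [LieHom.comp_apply, phi, lift_of_apply, AlgHom.toLieHom_apply]
    show theta n (MonoidAlgebra.single (FreeMonoid.of x) 1) = _
    simp only [theta, MonoidAlgebra.lift_single]
    simp [adof]
  exact DFunLike.congr_fun this u

theorem phi_of (x : Fin n) : phi n (of ℂ x) = MonoidAlgebra.single (FreeMonoid.of x) 1 := by
  simp only [phi, lift_of_apply]
  rfl

/-- The set of `v` for which `δ (a * φ v) = θ a (δ (φ v))` for all `a`. -/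
noncomputable def S : LieSubalgebra ℂ (L n) where
  carrier := {v | ∀ a : MA n, delta n (a * phi n v) = theta n a (delta n (phi n v))}
  zero_mem' := by
    show ∀ a : MA n, delta n (a * phi n 0) = theta n a (delta n (phi n 0))
    intro a; simp
  add_mem' := by
    intro u v hu hv
    show ∀ a : MA n, _
    intro a
    show delta n (a * phi n (u + v)) = theta n a (delta n (phi n (u + v)))
    rw [map_add (phi n) u v, mul_add, (delta n).map_add, hu a, hv a,
      (delta n).map_add, ((theta n) a).map_add]
  smul_mem' := by
    intro c u hu
    show ∀ a : MA n, _
    intro a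
    show delta n (a * phi n (c • u)) = theta n a (delta n (phi n (c • u)))
    rw [map_smul (phi n) c u, mul_smul_comm, (delta n).map_smul, hu a,
      (delta n).map_smul, ((theta n) a).map_smul]
  lie_mem' := by
    intro u v hu hv
    have hbr : phi n ⁅u, v⁆ = phi n u * phi n v - phi n v * phi n u := by
      rw [LieHom.map_lie]; rfl
    have main : ∀ a : MA n, delta n (a * phi n ⁅u, v⁆)
        = theta n a (⁅u, delta n (phi n v)⁆ - ⁅v, delta n (phi n u)⁆) := by
      intro a
      rw [hbr, mul_sub, map_sub, ← mul_assoc, ← mul_assoc, hv (a * phi n u),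
        hu (a * phi n v), map_mul, map_mul, Module.End.mul_apply, Module.End.mul_apply,
        theta_phi, theta_phi, LieAlgebra.ad_apply, LieAlgebra.ad_apply, map_sub]
    intro a
    have h1 := main 1
    rw [one_mul, map_one, Module.End.one_apply] at h1
    rw [main a, h1]

theorem key (u : L n) (a : MA n) :
    delta n (a * phi n u) = theta n a (delta n (phi n u)) := by
  have hu : u ∈ S n := by
    have h1 := mem_lieSpan_range_of n u
    have h2 : LieSubalgebra.lieSpan ℂ (L n) (Set.range (of ℂ)) ≤ S n := by
      rw [LieSubalgebra.lieSpan_le]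
      rintro _ ⟨x, rfl⟩
      intro a
      rw [phi_of, delta_mul_of, delta_single]
      have : FreeMonoid.toList (FreeMonoid.of x) = [x] := rfl
      rw [this]
      simp [brkt]
    exact h2 h1
  exact hu a

/-- The Euler (Dynkin) operator. -/
noncomputable def eps : Module.End ℂ (L n) := (delta n) ∘ₗ (phi n).toLinearMap

theorem eps_of (x : Fin n) : eps n (of ℂ x) = of ℂ x := by
  simp only [eps, LinearMap.comp_apply, LieHom.coe_toLinearMap, phi_of, delta_single]
  have : FreeMonoid.toList (FreeMonoid.of x) = [x] := rfl
  rw [this]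
  simp [brkt]

theorem eps_lie (u v : L n) : eps n ⁅u, v⁆ = ⁅eps n u, v⁆ + ⁅u, eps n v⁆ := by
  have hbr : phi n ⁅u, v⁆ = phi n u * phi n v - phi n v * phi n u := by
    rw [LieHom.map_lie]; rfl
  have h1 : delta n (phi n u * phi n v) = ⁅u, eps n v⁆ := by
    rw [key n v (phi n u), theta_phi, LieAlgebra.ad_apply]; rfl
  have h2 : delta n (phi n v * phi n u) = ⁅v, eps n u⁆ := by
    rw [key n u (phi n v), theta_phi, LieAlgebra.ad_apply]; rfl
  have : eps n ⁅u, v⁆ = delta n (phi n ⁅u, v⁆) := rfl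
  rw [this, hbr, map_sub, h1, h2, ← lie_skew v (eps n u)]
  abel

theorem lie_mem_eigen {p q : ℂ} {u v : L n}
    (hu : u ∈ Module.End.eigenspace (eps n) p) (hv : v ∈ Module.End.eigenspace (eps n) q) :
    ⁅u, v⁆ ∈ Module.End.eigenspace (eps n) (p + q) := by
  rw [Module.End.mem_eigenspace_iff] at hu hv ⊢
  rw [eps_lie, hu, hv, smul_lie, lie_smul, add_smul]

theorem mem_sup_eigen (u : L n) :
    u ∈ ⨆ m : ℕ, Module.End.eigenspace (eps n) ((m + 1 : ℕ) : ℂ) := by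
  set M := ⨆ m : ℕ, Module.End.eigenspace (eps n) ((m + 1 : ℕ) : ℂ) with hM
  have hlie : ∀ x ∈ M, ∀ y ∈ M, ⁅x, y⁆ ∈ M := by
    intro x hx
    refine Submodule.iSup_induction (motive := fun x => ∀ y ∈ M, ⁅x, y⁆ ∈ M) _ hx ?_ ?_ ?_
    · intro m x hxm y hy
      refine Submodule.iSup_induction (motive := fun y => ⁅x, y⁆ ∈ M) _ hy ?_ ?_ ?_
      · intro m' y hym
        have := lie_mem_eigen n hxm hym
        have hcast : ((m + 1 : ℕ) : ℂ) + ((m' + 1 : ℕ) : ℂ) = ((m + m' + 1 + 1 : ℕ) : ℂ) := by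
          push_cast; ring
        rw [hcast] at this
        exact Submodule.mem_iSup_of_mem (m + m' + 1) this
      · simp
      · intro a b ha hb
        rw [lie_add]
        exact add_mem ha hb
    · intro y hy; simp
    · intro a b ha hb y hy
      rw [add_lie]
      exact add_mem (ha y hy) (hb y hy)
  let K : LieSubalgebra ℂ (L n) :=
    { M with
      lie_mem' := fun {x y} hx hy => hlie x hx y hy }
  have hle : LieSubalgebra.lieSpan ℂ (L n) (Set.range (of ℂ)) ≤ K := by
    rw [LieSubalgebra.lieSpan_le]
    rintro _ ⟨x, rfl⟩
    show of ℂ x ∈ M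
    refine Submodule.mem_iSup_of_mem 0 ?_
    rw [Module.End.mem_eigenspace_iff, eps_of]
    norm_num
  exact hle (mem_lieSpan_range_of n u)

theorem eps_injective_enough (P : L n) (h0 : eps n P = 0) : P = 0 := by
  have h1 : P ∈ Module.End.eigenspace (eps n) 0 := by
    rw [Module.End.mem_eigenspace_iff, h0, zero_smul]
  have h2 : P ∈ ⨆ (μ : ℂ) (_ : μ ≠ 0), Module.End.eigenspace (eps n) μ := by
    have := mem_sup_eigen n P
    refine (iSup_le fun m : ℕ => ?_ :
      (⨆ m : ℕ, Module.End.eigenspace (eps n) ((m + 1 : ℕ) : ℂ)) ≤ _) this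
    refine le_iSup_of_le ((m + 1 : ℕ) : ℂ) (le_iSup_of_le ?_ le_rfl)
    exact Nat.cast_ne_zero.mpr (Nat.succ_ne_zero m)
  have hind := Module.End.eigenspaces_iSupIndep (eps n)
  have hdisj := (iSupIndep_def.mp hind) 0
  exact (Submodule.disjoint_def.mp hdisj) P h1 h2

/-- The (left) ideal of elements supported on words of length `≥ d`. -/
noncomputable def Idl (d : ℕ) : Submodule ℂ (MA n) where
  carrier := {a | ∀ w ∈ a.coeff.support, d ≤ w.length}
  zero_mem' := by intro w hw; simp at hw
  add_mem' := by
    classical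
    intro a b ha hb w hw
    rw [MonoidAlgebra.coeff_add] at hw
    rcases Finset.mem_union.mp (Finsupp.support_add hw) with h | h
    · exact ha w h
    · exact hb w h
  smul_mem' := by
    intro c a ha w hw
    rw [MonoidAlgebra.coeff_smul] at hw
    exact ha w (Finsupp.support_smul hw)

theorem mem_Idl {d : ℕ} {a : MA n} :
    a ∈ Idl n d ↔ ∀ w ∈ a.coeff.support, d ≤ w.length := Iff.rfl

theorem mul_mem_Idl {d : ℕ} (b : MA n) {a : MA n} (ha : a ∈ Idl n d) :
    b * a ∈ Idl n d := by
  classical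
  rw [mem_Idl] at ha ⊢
  intro w hw
  have := MonoidAlgebra.support_coeff_mul_subset b a hw
  rw [Finset.mem_mul] at this
  obtain ⟨y, hy, z, hz, rfl⟩ := this
  rw [FreeMonoid.length_mul]
  exact le_add_of_nonneg_of_le (Nat.zero_le _) (ha z hz)

theorem single_mem_Idl {d : ℕ} {w : FreeMonoid (Fin n)} (hw : d ≤ w.length) (c : ℂ) :
    (MonoidAlgebra.single w c : MA n) ∈ Idl n d := by
  rw [mem_Idl]
  intro v hv
  have := Finsupp.support_single_subset hv
  simp only [Finset.mem_singleton] at this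
  subst this
  exact hw

set_option maxHeartbeats 2000000 in
theorem phi_mem_Idl (P : L n)
    (h : ∀ (k : ℕ) (X : Fin n → Matrix (Fin k) (Fin k) ℂ),
      FreeLieAlgebra.lift ℂ X P = 0) (d : ℕ) :
    phi n P ∈ Idl n d := by
  classical
  set I := Idl n d with hI
  -- finite dimensionality of the quotient
  have hspan : Submodule.span ℂ
      ((fun w : FreeMonoid (Fin n) => Submodule.Quotient.mk (p := I)
        (MonoidAlgebra.single w (1 : ℂ))) '' {w | w.length < d}) = ⊤ := by
    rw [eq_top_iff]
    rintro q -
    obtain ⟨a, rfl⟩ := Submodule.Quotient.mk_surjective I q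
    induction a using MonoidAlgebra.induction_linear with
    | zero => simp
    | add f g hf hg =>
      rw [Submodule.Quotient.mk_add]
      exact Submodule.add_mem _ hf hg
    | single w c =>
      by_cases hlw : w.length < d
      · have : (MonoidAlgebra.single w c : MA n) = c • MonoidAlgebra.single w 1 := by
          rw [MonoidAlgebra.smul_single, smul_eq_mul, mul_one]
        rw [this, Submodule.Quotient.mk_smul]
        exact Submodule.smul_mem _ _ (Submodule.subset_span ⟨w, hlw, rfl⟩)
      · have : Submodule.Quotient.mk (p := I) (MonoidAlgebra.single w c) = 0 :=
          (Submodule.Quotient.mk_eq_zero I).mpr (single_mem_Idl n (not_lt.mp hlw) c)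
        rw [this]
        exact Submodule.zero_mem _
  have hfinset : ({w : FreeMonoid (Fin n) | w.length < d}).Finite :=
    List.finite_length_lt (Fin n) d
  haveI hfin : Module.Finite ℂ (MA n ⧸ I) :=
    ⟨Submodule.fg_def.mpr ⟨_, hfinset.image _, hspan⟩⟩
  -- the left regular representation on the quotient
  have hstab : ∀ a : MA n, I ≤ I.comap (LinearMap.mulLeft ℂ a) := by
    intro a v hv
    exact mul_mem_Idl n a hv
  let rho : MA n →ₐ[ℂ] Module.End ℂ (MA n ⧸ I) :=
    { toFun := fun a => Submodule.mapQ I I (LinearMap.mulLeft ℂ a) (hstab a)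
      map_one' := by
        apply LinearMap.ext
        intro q
        obtain ⟨a, rfl⟩ := Submodule.Quotient.mk_surjective I q
        rw [Submodule.mapQ_apply]
        simp
      map_mul' := by
        intro x y
        apply LinearMap.ext
        intro q
        obtain ⟨a, rfl⟩ := Submodule.Quotient.mk_surjective I q
        rw [Module.End.mul_apply, Submodule.mapQ_apply, Submodule.mapQ_apply,
          Submodule.mapQ_apply]
        simp [mul_assoc]
      map_zero' := by
        apply LinearMap.ext
        intro q
        obtain ⟨a, rfl⟩ := Submodule.Quotient.mk_surjective I q
        rw [Submodule.mapQ_apply]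
        simp
      map_add' := by
        intro x y
        apply LinearMap.ext
        intro q
        obtain ⟨a, rfl⟩ := Submodule.Quotient.mk_surjective I q
        rw [LinearMap.add_apply, Submodule.mapQ_apply, Submodule.mapQ_apply,
          Submodule.mapQ_apply]
        rw [LinearMap.mulLeft_apply, LinearMap.mulLeft_apply, LinearMap.mulLeft_apply,
          add_mul, Submodule.Quotient.mk_add]
      commutes' := by
        intro c
        apply LinearMap.ext
        intro q
        obtain ⟨a, rfl⟩ := Submodule.Quotient.mk_surjective I q
        rw [Submodule.mapQ_apply, LinearMap.mulLeft_apply, Module.algebraMap_end_apply,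
          ← Submodule.Quotient.mk_smul, ← Algebra.smul_def] }
  -- transfer to matrices
  let k := Module.finrank ℂ (MA n ⧸ I)
  let bb := Module.finBasis ℂ (MA n ⧸ I)
  let e := algEquivMatrix bb
  let psi : L n →ₗ⁅ℂ⁆ Matrix (Fin k) (Fin k) ℂ :=
    ((e.toAlgHom.comp rho).toLieHom).comp (phi n)
  have hpsi : psi P = 0 := by
    have hh := h k fun i => psi (of ℂ i)
    have : (fun i => psi (of ℂ i)) = ⇑psi ∘ of ℂ := rfl
    rw [this, FreeLieAlgebra.lift_comp_of] at hh
    exact hh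
  have hrho : rho (phi n P) = 0 := by
    apply e.injective
    rw [map_zero]
    exact hpsi
  have h1 : rho (phi n P) (Submodule.Quotient.mk (1 : MA n))
      = Submodule.Quotient.mk (phi n P) := by
    show Submodule.mapQ I I (LinearMap.mulLeft ℂ (phi n P)) (hstab _)
        (Submodule.Quotient.mk 1) = _
    rw [Submodule.mapQ_apply, LinearMap.mulLeft_apply, mul_one]
  rw [hrho, LinearMap.zero_apply] at h1
  exact (Submodule.Quotient.mk_eq_zero I).mp h1.symm

theorem phi_eq_zero (P : L n)
    (h : ∀ (k : ℕ) (X : Fin n → Matrix (Fin k) (Fin k) ℂ),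
      FreeLieAlgebra.lift ℂ X P = 0) :
    phi n P = 0 := by
  classical
  by_contra hne
  obtain ⟨w, hw⟩ := Finsupp.support_nonempty_iff.mpr (MonoidAlgebra.coeff_eq_zero.not.mpr hne)
  set d := (phi n P).coeff.support.sup FreeMonoid.length + 1 with hd
  have h1 : d ≤ w.length := phi_mem_Idl n P h d w hw
  have h2 : w.length ≤ (phi n P).coeff.support.sup FreeMonoid.length := Finset.le_sup hw
  omega

end Stmt5Aux

/-- A Lie polynomial (element of the free Lie algebra on `n`
generators over `ℂ`) vanishing identically on `gl_k(ℂ)` for all `k` is zero. -/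
theorem stmt5 (n : ℕ) (P : FreeLieAlgebra ℂ (Fin n))
    (h : ∀ (k : ℕ) (X : Fin n → Matrix (Fin k) (Fin k) ℂ),
      FreeLieAlgebra.lift ℂ X P = 0) :
    P = 0 := by
  apply Stmt5Aux.eps_injective_enough n
  show Stmt5Aux.delta n (Stmt5Aux.phi n P) = 0
  rw [Stmt5Aux.phi_eq_zero n P h, map_zero]
end

section
/- Let $\mathfrak{g}$ be a Lie algebra, $\mathfrak{l}\subseteq\mathfrak{g}$ a subalgebra with an $\mathfrak{l}$-invariant complement $\mathfrak{m}$ (so $\mathfrak{g}=\mathfrak{l}\oplus\mathfrak{m}$ and $[\mathfrak{l},\mathfrak{m}]\subseteq\mathfrak{m}$). Then $(\mathfrak{g}\otimes\mathfrak{l}\oplus\mathfrak{l}\otimes\mathfrak{g})^{\mathfrak{l}} = (\mathfrak{g}^{\mathfrak{l}}\otimes\mathfrak{l}\oplus\mathfrak{l}\otimes\mathfrak{g}^{\mathfrak{l}})^{\mathfrak{l}}$, where superscript $\mathfrak{l}$ denotes invariants for the adjoint action of $\mathfrak{l}$, provided $\mathfrak{l}$ is abelian. (Without the invariant-complement hypothesis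 this can fail.) -/
open scoped TensorProduct

/-- The image of `p ⊗ q` inside `g ⊗ g`, for submodules `p q ⊆ g`. -/
noncomputable def tensorSub (g : Type) [AddCommGroup g] [Module ℂ g]
    (p q : Submodule ℂ g) : Submodule ℂ (g ⊗[ℂ] g) :=
  Submodule.map₂ (TensorProduct.mk ℂ g g) p q

/-- The centralizer `g^l` of a Lie subalgebra `l`, as a submodule. -/
noncomputable def centralizerSub (g : Type) [LieRing g] [LieAlgebra ℂ g]
    (l : LieSubalgebra ℂ g) : Submodule ℂ g :=
  ⨅ a : l, LinearMap.ker ((LieAlgebra.ad ℂ g) (a : g))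


section Aux

variable {g : Type} [AddCommGroup g] [Module ℂ g]

/-- contraction on the left factor: `x ⊗ y ↦ φ x • y`. -/
noncomputable def contrL (φ : g →ₗ[ℂ] ℂ) : g ⊗[ℂ] g →ₗ[ℂ] g :=
  TensorProduct.lift ((LinearMap.lsmul ℂ g).comp φ)

/-- contraction on the right factor: `x ⊗ y ↦ φ y • x`. -/
noncomputable def contrR (φ : g →ₗ[ℂ] ℂ) : g ⊗[ℂ] g →ₗ[ℂ] g :=
  (contrL φ).comp (TensorProduct.comm ℂ g g).toLinearMap

@[simp] lemma contrL_tmul (φ : g →ₗ[ℂ] ℂ) (x y : g) : contrL φ (x ⊗ₜ y) = φ x • y := rfl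

@[simp] lemma contrR_tmul (φ : g →ₗ[ℂ] ℂ) (x y : g) : contrR φ (x ⊗ₜ y) = φ y • x := rfl

lemma mem_map₂_map (f₁ f₂ : g →ₗ[ℂ] g) (p q : Submodule ℂ g)
    (h1 : ∀ x, f₁ x ∈ p) (h2 : ∀ x, f₂ x ∈ q) (u : g ⊗[ℂ] g) :
    TensorProduct.map f₁ f₂ u ∈ Submodule.map₂ (TensorProduct.mk ℂ g g) p q := by
  induction u using TensorProduct.induction_on with
  | zero => simpa using Submodule.zero_mem _
  | tmul x y =>
      rw [TensorProduct.map_tmul]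
      exact Submodule.apply_mem_map₂ _ (h1 x) (h2 y)
  | add u v hu hv => rw [map_add]; exact Submodule.add_mem _ hu hv

lemma map_decomp (f₁ f₂ : g →ₗ[ℂ] g) (h : ∀ x, f₁ x + f₂ x = x) (u : g ⊗[ℂ] g) :
    TensorProduct.map f₁ f₁ u + TensorProduct.map f₁ f₂ u +
      TensorProduct.map f₂ f₁ u + TensorProduct.map f₂ f₂ u = u := by
  induction u using TensorProduct.induction_on with
  | zero => simp
  | tmul x y =>
      conv_rhs => rw [← h x, ← h y]
      simp only [TensorProduct.map_tmul, TensorProduct.add_tmul, TensorProduct.tmul_add]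
      abel
  | add u v hu hv =>
      simp only [map_add]
      conv_rhs => rw [← hu, ← hv]
      abel

lemma expansion_left {ι : Type} [Fintype ι] (v : ι → g) (φ : ι → (g →ₗ[ℂ] ℂ))
    (p : Submodule ℂ g) (hexp : ∀ x ∈ p, x = ∑ i, φ i x • v i)
    (u : g ⊗[ℂ] g) (hu : u ∈ Submodule.map₂ (TensorProduct.mk ℂ g g) p ⊤) :
    u = ∑ i, v i ⊗ₜ[ℂ] contrL (φ i) u := by
  rw [Submodule.map₂_eq_span_image2] at hu
  induction hu using Submodule.span_induction with
  | mem z hz =>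
      obtain ⟨x, hx, y, -, rfl⟩ := hz
      simp only [TensorProduct.mk_apply, contrL_tmul]
      calc x ⊗ₜ[ℂ] y = (∑ i, φ i x • v i) ⊗ₜ[ℂ] y := by rw [← hexp x hx]
        _ = ∑ i, v i ⊗ₜ[ℂ] (φ i x • y) := by
            rw [TensorProduct.sum_tmul]
            exact Finset.sum_congr rfl fun i _ => by
              rw [TensorProduct.smul_tmul]
  | zero => simp
  | add a b _ _ ha hb =>
      simp only [map_add, TensorProduct.tmul_add, Finset.sum_add_distrib]
      rw [← ha, ← hb]
  | smul c a _ ha =>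
      simp only [map_smul, TensorProduct.tmul_smul, ← Finset.smul_sum]
      rw [← ha]

lemma expansion_right {ι : Type} [Fintype ι] (v : ι → g) (φ : ι → (g →ₗ[ℂ] ℂ))
    (p : Submodule ℂ g) (hexp : ∀ x ∈ p, x = ∑ i, φ i x • v i)
    (u : g ⊗[ℂ] g) (hu : u ∈ Submodule.map₂ (TensorProduct.mk ℂ g g) ⊤ p) :
    u = ∑ i, contrR (φ i) u ⊗ₜ[ℂ] v i := by
  rw [Submodule.map₂_eq_span_image2] at hu
  induction hu using Submodule.span_induction with
  | mem z hz =>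
      obtain ⟨x, -, y, hy, rfl⟩ := hz
      simp only [TensorProduct.mk_apply, contrR_tmul]
      calc x ⊗ₜ[ℂ] y = x ⊗ₜ[ℂ] (∑ i, φ i y • v i) := by rw [← hexp y hy]
        _ = ∑ i, (φ i y • x) ⊗ₜ[ℂ] v i := by
            rw [TensorProduct.tmul_sum]
            exact Finset.sum_congr rfl fun i _ => by
              rw [TensorProduct.smul_tmul]
  | zero => simp
  | add a b _ _ ha hb =>
      simp only [map_add, TensorProduct.add_tmul, Finset.sum_add_distrib]
      rw [← ha, ← hb]
  | smul c a _ ha =>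
      simp only [map_smul, ← TensorProduct.smul_tmul', ← Finset.smul_sum]
      rw [← ha]

end Aux

section LieAux

variable {g : Type} [LieRing g] [LieAlgebra ℂ g]

lemma lie_map_comm (a : g) (f₁ f₂ : g →ₗ[ℂ] g)
    (h1 : ∀ x, ⁅a, f₁ x⁆ = f₁ ⁅a, x⁆) (h2 : ∀ x, ⁅a, f₂ x⁆ = f₂ ⁅a, x⁆)
    (u : g ⊗[ℂ] g) :
    ⁅a, TensorProduct.map f₁ f₂ u⁆ = TensorProduct.map f₁ f₂ ⁅a, u⁆ := by
  induction u using TensorProduct.induction_on with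
  | zero => simp
  | tmul x y =>
      simp only [TensorProduct.map_tmul, TensorProduct.LieModule.lie_tmul_right, map_add,
        h1, h2]
  | add u v hu hv =>
      simp only [lie_add, map_add, hu, hv]

lemma contrL_lie (a : g) (φ : g →ₗ[ℂ] ℂ) (hφ : ∀ x, φ ⁅a, x⁆ = 0) (u : g ⊗[ℂ] g) :
    contrL φ ⁅a, u⁆ = ⁅a, contrL φ u⁆ := by
  induction u using TensorProduct.induction_on with
  | zero => simp
  | tmul x y =>
      simp only [TensorProduct.LieModule.lie_tmul_right, map_add, contrL_tmul, hφ, zero_smul,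
        add_zero, zero_add, lie_smul]
  | add u v hu hv => simp only [lie_add, map_add, hu, hv]

lemma contrR_lie (a : g) (φ : g →ₗ[ℂ] ℂ) (hφ : ∀ x, φ ⁅a, x⁆ = 0) (u : g ⊗[ℂ] g) :
    contrR φ ⁅a, u⁆ = ⁅a, contrR φ u⁆ := by
  induction u using TensorProduct.induction_on with
  | zero => simp
  | tmul x y =>
      simp only [TensorProduct.LieModule.lie_tmul_right, map_add, contrR_tmul, hφ, zero_smul,
        add_zero, zero_add, lie_smul, smul_lie]
  | add u v hu hv => simp only [lie_add, map_add, hu, hv]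

end LieAux


/-- If `l ⊆ g` is an abelian subalgebra with an `l`-invariant
complement `m`, then `(g⊗l ⊕ l⊗g)^l = (g^l⊗l ⊕ l⊗g^l)^l`. -/
theorem stmt8 (g : Type) [LieRing g] [LieAlgebra ℂ g] [FiniteDimensional ℂ g]
    (l : LieSubalgebra ℂ g) (habel : ∀ a b : g, a ∈ l → b ∈ l → ⁅a, b⁆ = 0)
    (m : Submodule ℂ g) (hcompl : IsCompl l.toSubmodule m)
    (hinv : ∀ a ∈ l, ∀ z ∈ m, ⁅a, z⁆ ∈ m) :
    {w : g ⊗[ℂ] g |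
        w ∈ tensorSub g ⊤ l.toSubmodule ⊔ tensorSub g l.toSubmodule ⊤ ∧
        ∀ a ∈ l, ⁅a, w⁆ = 0} =
    {w : g ⊗[ℂ] g |
        w ∈ tensorSub g (centralizerSub g l) l.toSubmodule ⊔
              tensorSub g l.toSubmodule (centralizerSub g l) ∧
        ∀ a ∈ l, ⁅a, w⁆ = 0} := by
  -- basic projections
  classical
  set P : g →ₗ[ℂ] g :=
    l.toSubmodule.subtype.comp (l.toSubmodule.linearProjOfIsCompl m hcompl) with hPdef
  set Q : g →ₗ[ℂ] g :=
    m.subtype.comp (m.linearProjOfIsCompl l.toSubmodule hcompl.symm) with hQdef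
  have hPQ : ∀ x : g, P x + Q x = x := fun x =>
    Submodule.projection_add_projection_eq_self hcompl x
  have hPmem : ∀ x : g, P x ∈ l := fun x => (l.toSubmodule.linearProjOfIsCompl m hcompl x).2
  have hQmem : ∀ x : g, Q x ∈ m := fun x => (m.linearProjOfIsCompl l.toSubmodule hcompl.symm x).2
  have hPl : ∀ x : g, x ∈ l → P x = x := by
    intro x hx
    have := Submodule.linearProjOfIsCompl_apply_left hcompl ⟨x, hx⟩
    simp only [hPdef, LinearMap.comp_apply, Submodule.coe_subtype]
    erw [this]
  have hPm : ∀ x : g, x ∈ m → P x = 0 := by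
    intro x hx
    simp only [hPdef, LinearMap.comp_apply, Submodule.coe_subtype]
    erw [Submodule.linearProjOfIsCompl_apply_right hcompl ⟨x, hx⟩]
    rfl
  have hQl : ∀ x : g, x ∈ l → Q x = 0 := by
    intro x hx
    have h := hPQ x
    rw [hPl x hx] at h
    exact add_eq_left.1 h
  -- bracket with l lands in m
  have hbm : ∀ a ∈ l, ∀ x : g, ⁅a, x⁆ ∈ m := by
    intro a ha x
    have h1 : ⁅a, P x⁆ = 0 := habel a (P x) ha (hPmem x)
    have h2 : ⁅a, Q x⁆ ∈ m := hinv a ha (Q x) (hQmem x)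
    have : ⁅a, x⁆ = ⁅a, P x⁆ + ⁅a, Q x⁆ := by rw [← lie_add, hPQ x]
    rw [this, h1, zero_add]; exact h2
  have hadP : ∀ a ∈ l, ∀ x : g, ⁅a, P x⁆ = P ⁅a, x⁆ := by
    intro a ha x
    rw [habel a (P x) ha (hPmem x), hPm _ (hbm a ha x)]
  have hadQ : ∀ a ∈ l, ∀ x : g, ⁅a, Q x⁆ = Q ⁅a, x⁆ := by
    intro a ha x
    have h1 : Q ⁅a, x⁆ = ⁅a, x⁆ - P ⁅a, x⁆ := by
      have h := hPQ ⁅a, x⁆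
      linear_combination (norm := abel) h
    have h2 : ⁅a, Q x⁆ = ⁅a, x⁆ - ⁅a, P x⁆ := by
      have := hPQ x
      calc ⁅a, Q x⁆ = ⁅a, (P x + Q x) - P x⁆ := by rw [add_sub_cancel_left]
        _ = ⁅a, x⁆ - ⁅a, P x⁆ := by rw [this, lie_sub]
    rw [h1, h2, hadP a ha x]
  -- l is contained in the centralizer
  have hlc : l.toSubmodule ≤ centralizerSub g l := by
    intro x hx
    simp only [centralizerSub, Submodule.mem_iInf, LinearMap.mem_ker, LieAlgebra.ad_apply]
    exact fun a => habel (a : g) x a.2 hx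
  -- dual basis functionals for l
  set b := Module.finBasis ℂ l.toSubmodule with hb
  set φ : Fin (Module.finrank ℂ l.toSubmodule) → (g →ₗ[ℂ] ℂ) :=
    fun i => (b.coord i).comp (l.toSubmodule.linearProjOfIsCompl m hcompl) with hφ
  have hexp : ∀ x ∈ l.toSubmodule, x = ∑ i, φ i x • ((b i : g)) := by
    intro x hx
    have h1 : (l.toSubmodule.linearProjOfIsCompl m hcompl) x = ⟨x, hx⟩ :=
      Submodule.linearProjOfIsCompl_apply_left hcompl ⟨x, hx⟩
    simp only [hφ, LinearMap.comp_apply, h1]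
    have := b.sum_repr ⟨x, hx⟩
    calc x = ((⟨x, hx⟩ : l.toSubmodule) : g) := rfl
      _ = ((∑ i, b.repr ⟨x, hx⟩ i • b i : l.toSubmodule) : g) := by rw [this]
      _ = ∑ i, b.repr ⟨x, hx⟩ i • ((b i : g)) := by
          push_cast [Submodule.coe_sum]
          rfl
  have hφlie : ∀ a ∈ l, ∀ i, ∀ x : g, φ i ⁅a, x⁆ = 0 := by
    intro a ha i x
    simp only [hφ, LinearMap.comp_apply]
    erw [Submodule.linearProjOfIsCompl_apply_right hcompl ⟨⁅a, x⁆, hbm a ha x⟩]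
    simp
  ext w
  simp only [Set.mem_setOf_eq]
  constructor
  · rintro ⟨hw, hw2⟩
    refine ⟨?_, hw2⟩
    -- the four components
    have hdecomp := map_decomp P Q hPQ w
    -- QQ component vanishes
    have hQQ : TensorProduct.map Q Q w = 0 := by
      have hker : tensorSub g ⊤ l.toSubmodule ⊔ tensorSub g l.toSubmodule ⊤ ≤
          LinearMap.ker (TensorProduct.map Q Q) := by
        refine sup_le ?_ ?_ <;> rw [tensorSub] <;> refine Submodule.map₂_le.2 ?_
        · intro x _ y hy
          simp only [LinearMap.mem_ker, TensorProduct.mk_apply, TensorProduct.map_tmul,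
            hQl y hy, TensorProduct.tmul_zero]
        · intro x hx y _
          simp only [LinearMap.mem_ker, TensorProduct.mk_apply, TensorProduct.map_tmul,
            hQl x hx, TensorProduct.zero_tmul]
      exact hker hw
    -- invariance of each component
    have hinvPQ : ∀ a ∈ l, ⁅a, TensorProduct.map P Q w⁆ = 0 := by
      intro a ha
      rw [lie_map_comm a P Q (hadP a ha) (hadQ a ha) w, hw2 a ha, map_zero]
    have hinvQP : ∀ a ∈ l, ⁅a, TensorProduct.map Q P w⁆ = 0 := by
      intro a ha
      rw [lie_map_comm a Q P (hadQ a ha) (hadP a ha) w, hw2 a ha, map_zero]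
    -- component memberships
    have hPP : TensorProduct.map P P w ∈
        tensorSub g (centralizerSub g l) l.toSubmodule :=
      mem_map₂_map P P _ _ (fun x => hlc (hPmem x)) hPmem w
    have hPQmem : TensorProduct.map P Q w ∈
        tensorSub g l.toSubmodule (centralizerSub g l) := by
      have hin : TensorProduct.map P Q w ∈
          Submodule.map₂ (TensorProduct.mk ℂ g g) l.toSubmodule ⊤ :=
        mem_map₂_map P Q _ _ hPmem (fun _ => Submodule.mem_top) w
      have heq := expansion_left (fun i => ((b i : g))) φ l.toSubmodule hexp _ hin
      rw [tensorSub, heq]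
      refine Submodule.sum_mem _ fun i _ => ?_
      refine Submodule.apply_mem_map₂ _ (b i).2 ?_
      simp only [centralizerSub, Submodule.mem_iInf, LinearMap.mem_ker, LieAlgebra.ad_apply]
      intro a
      rw [← contrL_lie (a : g) (φ i) (hφlie a a.2 i) _, hinvPQ a a.2, map_zero]
    have hQPmem : TensorProduct.map Q P w ∈
        tensorSub g (centralizerSub g l) l.toSubmodule := by
      have hin : TensorProduct.map Q P w ∈
          Submodule.map₂ (TensorProduct.mk ℂ g g) ⊤ l.toSubmodule :=
        mem_map₂_map Q P _ _ (fun _ => Submodule.mem_top) hPmem w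
      have heq := expansion_right (fun i => ((b i : g))) φ l.toSubmodule hexp _ hin
      rw [tensorSub, heq]
      refine Submodule.sum_mem _ fun i _ => ?_
      refine Submodule.apply_mem_map₂ _ ?_ (b i).2
      simp only [centralizerSub, Submodule.mem_iInf, LinearMap.mem_ker, LieAlgebra.ad_apply]
      intro a
      rw [← contrR_lie (a : g) (φ i) (hφlie a a.2 i) _, hinvQP a a.2, map_zero]
    rw [← hdecomp, hQQ, add_zero]
    exact Submodule.add_mem _
      (Submodule.add_mem _ (Submodule.mem_sup_left hPP) (Submodule.mem_sup_right hPQmem))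
      (Submodule.mem_sup_left hQPmem)
  · rintro ⟨hw, hw2⟩
    refine ⟨?_, hw2⟩
    have hle : tensorSub g (centralizerSub g l) l.toSubmodule ⊔
        tensorSub g l.toSubmodule (centralizerSub g l) ≤
        tensorSub g ⊤ l.toSubmodule ⊔ tensorSub g l.toSubmodule ⊤ :=
      sup_le_sup (Submodule.map₂_le_map₂_left le_top)
        (Submodule.map₂_le_map₂_right le_top)
    exact hle hw
end
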